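/- Let a, b, c > 0 and let ψ ≤ N with ψ > 0, β > 0, α > 0, n ≥ 1. Suppose that at a point the inequality n·α·f·K^α ≥ β·v + α·f·K^α·H·ψ·v holds, where f ≥ m > 0, f ≤ M, v ≥ 1, K > 0, H ≥ n·K^{1/n}, β ≤ N, ψ ≤ N. Then ψ·v ≤ N·β^{-1}·n·α·max(M, 1). -/

import Mathlib

lemma young_aux (n : ℕ) (hn : 1 ≤ n) (α K : ℝ) (hα : 0 < α) (hK : 0 < K) :
    1 ≤ K ^ (-α) + (n : ℝ) * α * K ^ ((1 : ℝ) / n) := by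
  have hn' : (0:ℝ) < n := by exact_mod_cast hn.trans_lt' (by norm_num)
  have hd : 0 < (n:ℝ) * α + 1 := by positivity
  set w1 : ℝ := 1 / ((n:ℝ) * α + 1) with hw1def
  set w2 : ℝ := (n:ℝ) * α / ((n:ℝ) * α + 1) with hw2def
  have hw1 : 0 ≤ w1 := by positivity
  have hw2 : 0 ≤ w2 := by positivity
  have hw : w1 + w2 = 1 := by rw [hw1def, hw2def]; field_simp; ring
  have hp1 : (0:ℝ) ≤ K ^ (-α) := (Real.rpow_pos_of_pos hK _).le
  have hp2 : (0:ℝ) ≤ K ^ ((1:ℝ)/n) := (Real.rpow_pos_of_pos hK _).le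
  have hg := Real.geom_mean_le_arith_mean2_weighted hw1 hw2 hp1 hp2 hw
  have he : (K ^ (-α)) ^ w1 * (K ^ ((1:ℝ)/n)) ^ w2 = 1 := by
    rw [← Real.rpow_mul hK.le, ← Real.rpow_mul hK.le, ← Real.rpow_add hK]
    rw [show -α * w1 + (1:ℝ)/n * w2 = 0 by
      rw [hw1def, hw2def]; field_simp; ring]
    exact Real.rpow_zero K
  rw [he] at hg
  have hb1 : w1 ≤ 1 := by rw [hw1def, div_le_one hd]; nlinarith
  have hb2 : w2 ≤ (n:ℝ) * α := by rw [hw2def, div_le_iff₀ hd]; nlinarith [mul_nonneg (mul_nonneg hn'.le hα.le) (mul_nonneg hn'.le hα.le)]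
  nlinarith [mul_le_mul_of_nonneg_right hb1 hp1, mul_le_mul_of_nonneg_right hb2 hp2]

theorem gradient_estimate_core (n : ℕ) (hn : 1 ≤ n)
    (α β N m M v ψ f K H : ℝ)
    (hα : 0 < α) (hβ : 0 < β) (hβN : β ≤ N)
    (hψ : 0 < ψ) (hψN : ψ ≤ N)
    (hm : 0 < m) (hmf : m ≤ f) (hfM : f ≤ M)
    (hv : 1 ≤ v) (hK : 0 < K)
    (hH : (n : ℝ) * K ^ ((1 : ℝ) / n) ≤ H)
    (hineq : (n : ℝ) * α * f * K ^ α ≥ β * v + α * f * K ^ α * H * ψ * v) :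
    ψ * v ≤ N * β⁻¹ * n * α * max M 1 := by
  have hf : 0 < f := hm.trans_le hmf
  have hN : 0 < N := hβ.trans_le hβN
  have hv0 : 0 < v := lt_of_lt_of_le one_pos hv
  have hn' : (0:ℝ) < n := by exact_mod_cast hn.trans_lt' (by norm_num)
  set Q : ℝ := K ^ ((1:ℝ)/n) with hQdef
  set P : ℝ := K ^ (-α) with hPdef
  have hQ : 0 < Q := Real.rpow_pos_of_pos hK _
  have hP : 0 < P := Real.rpow_pos_of_pos hK _
  have hT : 0 < K ^ α := Real.rpow_pos_of_pos hK _
  have hKP : K ^ α * P = 1 := by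
    rw [hPdef, ← Real.rpow_add hK, add_neg_cancel, Real.rpow_zero]
  set M' : ℝ := max M 1 with hM'def
  have hM'1 : 1 ≤ M' := le_max_right _ _
  have hfM' : f ≤ M' := hfM.trans (le_max_left _ _)
  -- Step 1: replace H by its lower bound
  have step1 : β * v + α * f * K ^ α * ((n:ℝ) * Q) * ψ * v ≤ (n:ℝ) * α * f * K ^ α := by
    nlinarith [mul_nonneg (mul_nonneg (mul_nonneg (mul_nonneg hα.le hf.le) hT.le) hψ.le) hv0.le,
      mul_nonneg (mul_nonneg (mul_nonneg (mul_nonneg hα.le hf.le) hT.le) hψ.le)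
        (mul_nonneg hv0.le (sub_nonneg.2 hH))]
  -- Step 2: multiply by P = K^(-α)
  have step2 : β * v * P + (n:ℝ) * α * f * Q * ψ * v ≤ (n:ℝ) * α * f := by
    have h := mul_le_mul_of_nonneg_right step1 hP.le
    have e1 : (n:ℝ) * α * f * K ^ α * P = (n:ℝ) * α * f := by
      linear_combination ((n:ℝ) * α * f) * hKP
    have e2 : α * f * K ^ α * ((n:ℝ) * Q) * ψ * v * P = (n:ℝ) * α * f * Q * ψ * v := by
      linear_combination (α * f * (n:ℝ) * Q * ψ * v) * hKP
    nlinarith [h, e1, e2]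
  -- Young inequality
  have hy : 1 ≤ P + (n:ℝ) * α * Q := young_aux n hn α K hα hK
  -- Combine
  have hb := mul_le_mul_of_nonneg_left hy
    (by positivity : (0:ℝ) ≤ f * (β * (ψ * v)))
  have c1 : f * ψ ≤ M' * N := mul_le_mul hfM' hψN hψ.le (by positivity)
  have hc := mul_le_mul_of_nonneg_right c1 (by positivity : (0:ℝ) ≤ β * v * P)
  have hβNM : β ≤ N * M' := hβN.trans (le_mul_of_one_le_right hN.le hM'1)
  have ht2 := mul_le_mul_of_nonneg_right hβNM
    (by positivity : (0:ℝ) ≤ f * ψ * v * ((n:ℝ) * α) * Q)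
  have hs2 := mul_le_mul_of_nonneg_left step2 (by positivity : (0:ℝ) ≤ N * M')
  have key : f * (β * (ψ * v)) ≤ f * (N * (n:ℝ) * α * M') := by nlinarith [hb, hc, ht2, hs2]
  have hfinal : β * (ψ * v) ≤ N * (n:ℝ) * α * M' := le_of_mul_le_mul_left key hf
  calc ψ * v = β⁻¹ * (β * (ψ * v)) := by field_simp
    _ ≤ β⁻¹ * (N * (n:ℝ) * α * M') :=
        mul_le_mul_of_nonneg_left hfinal (inv_nonneg.2 hβ.le)
    _ = N * β⁻¹ * n * α * max M 1 := by rw [hM'def]; ring
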